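/- Let (α_1,…,α_n, τ) be a nondegenerate compatible tuple on V and suppose there exist indices i,j such that α_i maps every vector outside ker τ to a vector outside ker τ, and likewise for α_j. Then there exists a nonzero scalar λ ∈ K such that α_i = λ·α_j; moreover λ = τ(α_i(u))/τ(α_j(u)) for any u with τ(u) ≠ 0. -/

import Mathlib

set_option linter.unusedSectionVars false

variable {K V : Type*} [Field K] [CharZero K] [AddCommGroup V] [Module K V]


private lemma smul_aux {K V : Type*} [Field K] [AddCommGroup V] [Module K V]
    {a c : K} {x y : V} (hc : c ≠ 0) (h : a • y = c • x) : x = (a / c) • y := by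
  rw [div_eq_mul_inv, mul_comm, mul_smul, eq_inv_smul_iff₀ hc]
  exact h.symm

/-- for a nondegenerate compatible tuple, if α_i and α_j both map the
complement U of ker τ into U, then α_i = λ α_j with λ = τ(α_i(u))/τ(α_j(u)) ≠ 0 for any
u ∈ U. -/
theorem alpha_proportional (n : ℕ) (α : Fin n → V →ₗ[K] V) (τ : V →ₗ[K] K)
    (hc1 : ∀ (i : Fin n) (x y : V), τ (α i x) * τ y = τ x * τ (α i y))
    (hc2 : ∀ (i j : Fin n) (x y : V), τ (α i x) • α j y = τ (α j y) • α i x)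
    (hker_top : LinearMap.ker τ ≠ ⊤) (hker_bot : LinearMap.ker τ ≠ ⊥)
    (i j : Fin n)
    (hi : ∀ x : V, τ x ≠ 0 → τ (α i x) ≠ 0)
    (hj : ∀ x : V, τ x ≠ 0 → τ (α j x) ≠ 0) :
    ∃ lam : K, lam ≠ 0 ∧ α i = lam • α j ∧
      ∀ u : V, τ u ≠ 0 → lam = τ (α i u) / τ (α j u) := by
  obtain ⟨u, hu⟩ : ∃ u, τ u ≠ 0 := by
    by_contra h
    push_neg at h
    exact hker_top (LinearMap.ker_eq_top.mpr (by ext x; exact h x))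
  have hiu := hi u hu
  have hju := hj u hu
  refine ⟨τ (α i u) / τ (α j u), div_ne_zero hiu hju, ?_, ?_⟩
  · ext v
    have h1 : α i v = (τ (α i v) / τ (α j u)) • α j u := by
      exact smul_aux hju (hc2 i j v u)
    have h2 : α j v = (τ (α j v) / τ (α i u)) • α i u := by
      exact smul_aux hiu (hc2 j i v u)
    have h3 : α i u = (τ (α i u) / τ (α j u)) • α j u := by
      exact smul_aux hju (hc2 i j u u)
    have h4 : τ (α i v) = τ v * τ (α i u) / τ u := by
      field_simp
      exact hc1 i v u
    have h5 : τ (α j v) = τ v * τ (α j u) / τ u := by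
      field_simp
      exact hc1 j v u
    show α i v = (τ (α i u) / τ (α j u)) • α j v
    rw [h1, h2, h3, h4, h5, smul_smul, smul_smul]
    congr 1
    field_simp
  · intro w hw
    have hiw := hi w hw
    have hjw := hj w hw
    have h4 : τ (α i w) * τ u = τ w * τ (α i u) := hc1 i w u
    have h5 : τ (α j w) * τ u = τ w * τ (α j u) := hc1 j w u
    field_simp
    -- τ(α i u) * τ(α j w) = τ(α i w) * τ(α j u)
    have := mul_left_cancel₀ hw (by
      calc τ w * (τ (α i u) * τ (α j w)) = (τ w * τ (α i u)) * τ (α j w) := by ring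
        _ = (τ (α i w) * τ u) * τ (α j w) := by rw [h4]
        _ = τ (α i w) * (τ (α j w) * τ u) := by ring
        _ = τ (α i w) * (τ w * τ (α j u)) := by rw [h5]
        _ = τ w * (τ (α i w) * τ (α j u)) := by ring)
    linear_combination this
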